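/- For fixed x, y ∈ (0,1), T_λ(x,y) tends to 0 as λ → 0⁺ (matching the drastic product since x, y < 1). -/

import Mathlib

open Filter Real

theorem aczel_alsina_tendsto_zero (x y : ℝ)
    (hx : x ∈ Set.Ioo (0:ℝ) 1) (hy : y ∈ Set.Ioo (0:ℝ) 1) :
    Filter.Tendsto
      (fun lam : ℝ => Real.exp (-(((-Real.log x) ^ lam + (-Real.log y) ^ lam) ^ (1/lam))))
      (nhdsWithin 0 (Set.Ioi 0)) (nhds 0) := by
  set a := -Real.log x with ha
  set b := -Real.log y with hb
  have ha0 : 0 < a := by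
    have := Real.log_neg hx.1 hx.2
    simp [ha]; linarith
  have hb0 : 0 < b := by
    have := Real.log_neg hy.1 hy.2
    simp [hb]; linarith
  -- sum tends to 2
  have hsum : Tendsto (fun lam : ℝ => a ^ lam + b ^ lam) (nhdsWithin 0 (Set.Ioi 0)) (nhds 2) := by
    have h1 : Tendsto (fun lam : ℝ => a ^ lam) (nhds 0) (nhds 1) := by
      have := (Real.continuousAt_const_rpow (ne_of_gt ha0) : ContinuousAt (fun lam : ℝ => a ^ lam) 0)
      simpa [Real.rpow_zero] using this.tendsto
    have h2 : Tendsto (fun lam : ℝ => b ^ lam) (nhds 0) (nhds 1) := by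
      have := (Real.continuousAt_const_rpow (ne_of_gt hb0) : ContinuousAt (fun lam : ℝ => b ^ lam) 0)
      simpa [Real.rpow_zero] using this.tendsto
    have := (h1.add h2).mono_left (nhdsWithin_le_nhds (s := Set.Ioi (0:ℝ)))
    norm_num at this
    exact this
  have hev : ∀ᶠ lam : ℝ in nhdsWithin 0 (Set.Ioi 0), (3/2 : ℝ) ≤ a ^ lam + b ^ lam := by
    have : ∀ᶠ s in nhds (2:ℝ), (3/2 : ℝ) ≤ s := Filter.Tendsto.eventually_const_le (by norm_num) tendsto_id
    exact hsum.eventually this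
  have hpos : ∀ᶠ lam in nhdsWithin 0 (Set.Ioi 0), (0:ℝ) < lam := self_mem_nhdsWithin
  -- minorant tends to 0
  have hg : Tendsto (fun lam : ℝ => Real.exp (-((3/2 : ℝ) ^ (1/lam))))
      (nhdsWithin 0 (Set.Ioi 0)) (nhds 0) := by
    have hinv : Tendsto (fun lam : ℝ => 1/lam) (nhdsWithin 0 (Set.Ioi 0)) atTop := by
      simpa [one_div] using tendsto_inv_nhdsGT_zero
    have hb32 : Tendsto (fun t : ℝ => (3/2 : ℝ) ^ t) atTop atTop := by
      have hlog : (0:ℝ) < Real.log (3/2) := Real.log_pos (by norm_num)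
      have : Tendsto (fun t : ℝ => Real.exp (t * Real.log (3/2))) atTop atTop :=
        Real.tendsto_exp_atTop.comp (Tendsto.atTop_mul_const hlog tendsto_id)
      refine this.congr fun t => ?_
      rw [Real.rpow_def_of_pos (by norm_num)]
      ring_nf
    have := Real.tendsto_exp_atBot.comp ((tendsto_neg_atTop_atBot).comp (hb32.comp hinv))
    exact this
  refine squeeze_zero' (Eventually.of_forall fun lam => (Real.exp_pos _).le) ?_ hg
  filter_upwards [hev, hpos] with lam h32 hlam
  apply Real.exp_le_exp.2
  apply neg_le_neg
  exact Real.rpow_le_rpow (by norm_num) h32 (by positivity)
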